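/- Let n ≥ 1, m ≥ n, and let x : [n] → ℕ be a load vector with Σ_{i=1}^n x_i = m. Let κ := |{i ∈ [n] : x_i > 0}|. Let Z_1, …, Z_κ be independent random variables, each uniformly distributed on [n], and define x'_i := x_i − 1_{x_i > 0} + Σ_{j=1}^{κ} 1_{Z_j = i} for each i ∈ [n]. Then for any α > 0, E[Σ_{i=1}^n e^{α x'_i}] ≤ (Σ_{i=1}^n e^{α x_i}) · e^{−α} · e^{((e^α − 1)/n)·κ} + (n − κ) · e^{((e^α − 1)/n)·κ}. -/

import Mathlib

set_option maxHeartbeats 1000000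


open MeasureTheory ProbabilityTheory Finset
open scoped ENNReal

/-- The number of non-empty bins of a load vector. -/
def kappa {n : ℕ} (x : Fin n → ℕ) : ℕ := (Finset.univ.filter fun i => 0 < x i).card

/-- **Lemma 4.1 (exponential potential, one round).** Let `x : [n] → ℕ` be a load vector
with `m ≥ n` balls and `(kappa x)` non-empty bins. If one ball is removed from each non-empty bin
and re-allocated to a bin chosen independently and uniformly at random, then for any
`α > 0` the expected exponential potential after the round is at most
`Φ · e^{-α} · e^{((e^α - 1)/n)·(kappa x)} + (n - (kappa x)) · e^{((e^α - 1)/n)·(kappa x)}`. -/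
theorem rbb_exp_potential_one_round
    (n m : ℕ) (hn : 1 ≤ n) (hm : n ≤ m)
    (x : Fin n → ℕ) (hx : (∑ i, x i) = m)
    (Ω : Type) [MeasurableSpace Ω] (P : Measure Ω) [IsProbabilityMeasure P]
    (Z : Fin (kappa x) → Ω → Fin n)
    (hmeas : ∀ j, Measurable (Z j))
    (hindep : iIndepFun Z P)
    (hunif : ∀ j i, P {ω | Z j ω = i} = (n : ℝ≥0∞)⁻¹)
    (α : ℝ) (hα : 0 < α) :
    (∫ ω, (∑ i, Real.exp (α * ((x i - (if 0 < x i then 1 else 0)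
        + (Finset.univ.filter fun j => Z j ω = i).card : ℕ) : ℝ))) ∂P)
      ≤ (∑ i, Real.exp (α * (x i : ℝ))) * Real.exp (-α)
          * Real.exp ((Real.exp α - 1) / n * (kappa x : ℝ))
        + ((n - kappa x : ℕ) : ℝ) * Real.exp ((Real.exp α - 1) / n * (kappa x : ℝ)) := by
  classical
  have hn0 : (0:ℝ) < n := by exact_mod_cast hn
  -- indicator random variables
  set X : Fin n → Fin (kappa x) → Ω → ℝ := fun i j ω => if Z j ω = i then 1 else 0 with hX
  have hXmeas : ∀ i j, Measurable (X i j) := by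
    intro i j
    have : X i j = (fun z : Fin n => if z = i then (1:ℝ) else 0) ∘ Z j := rfl
    rw [this]
    exact (Measurable.of_discrete).comp (hmeas j)
  have hXindep : ∀ i, iIndepFun (X i) P := by
    intro i
    exact hindep.comp (fun j (z : Fin n) => if z = i then (1:ℝ) else 0)
      (fun j => Measurable.of_discrete)
  -- the single-variable mgf
  have hmgf : ∀ i j, mgf (X i j) P α = 1 + (Real.exp α - 1) / n := by
    intro i j
    have hs : MeasurableSet {ω | Z j ω = i} := (hmeas j) (measurableSet_singleton i)
    have hpt : ∀ ω, Real.exp (α * X i j ω)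
        = 1 + (Real.exp α - 1) * Set.indicator {ω | Z j ω = i} (fun _ => (1:ℝ)) ω := by
      intro ω
      by_cases h : Z j ω = i
      · simp [hX, h, Set.indicator_of_mem (by exact h : ω ∈ {ω | Z j ω = i})]
      · simp [hX, h, Set.indicator_of_notMem (by exact h : ω ∉ {ω | Z j ω = i})]
    have hint : Integrable (Set.indicator {ω | Z j ω = i} (fun _ => (1:ℝ))) P :=
      (integrable_const (1:ℝ)).indicator hs
    have : mgf (X i j) P α
        = ∫ ω, (1 + (Real.exp α - 1) * Set.indicator {ω | Z j ω = i} (fun _ => (1:ℝ)) ω) ∂P := by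
      unfold mgf
      exact integral_congr_ae (Filter.Eventually.of_forall hpt)
    rw [this, integral_add (integrable_const 1) (hint.const_mul _), integral_const,
      integral_const_mul]
    have hind : ∫ ω, Set.indicator {ω | Z j ω = i} (fun _ => (1:ℝ)) ω ∂P
        = (P {ω | Z j ω = i}).toReal := by
      rw [integral_indicator hs]
      simp [measureReal_def]
    rw [hind, hunif j i]
    have : ((n : ℝ≥0∞)⁻¹).toReal = (n:ℝ)⁻¹ := by
      rw [ENNReal.toReal_inv]; simp
    rw [this]
    simp [measure_univ, div_eq_mul_inv]
  -- integrability of each indicator exponential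
  have hXint : ∀ i j, Integrable (fun ω => Real.exp (α * X i j ω)) P := by
    intro i j
    have hs : MeasurableSet {ω | Z j ω = i} := (hmeas j) (measurableSet_singleton i)
    have hpt : ∀ ω, Real.exp (α * X i j ω)
        = 1 + (Real.exp α - 1) * Set.indicator {ω | Z j ω = i} (fun _ => (1:ℝ)) ω := by
      intro ω
      by_cases h : Z j ω = i
      · simp [hX, h, Set.indicator_of_mem (by exact h : ω ∈ {ω | Z j ω = i})]
      · simp [hX, h, Set.indicator_of_notMem (by exact h : ω ∉ {ω | Z j ω = i})]
    have : (fun ω => Real.exp (α * X i j ω))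
        = fun ω => 1 + (Real.exp α - 1) * Set.indicator {ω | Z j ω = i} (fun _ => (1:ℝ)) ω :=
      funext hpt
    rw [this]
    exact (integrable_const 1).add (((integrable_const (1:ℝ)).indicator hs).const_mul _)
  -- rewrite each summand
  have hb : ∀ i, (if 0 < x i then 1 else 0) ≤ x i := by
    intro i; split <;> omega
  have hcast : ∀ i ω, ((x i - (if 0 < x i then 1 else 0)
      + (Finset.univ.filter fun j => Z j ω = i).card : ℕ) : ℝ)
      = ((x i : ℝ) - (if 0 < x i then (1:ℝ) else 0)) + (∑ j, X i j) ω := by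
    intro i ω
    have hcard : ((Finset.univ.filter fun j => Z j ω = i).card : ℝ) = (∑ j, X i j) ω := by
      rw [Finset.card_filter]
      push_cast
      rw [Finset.sum_apply]
    push_cast [Nat.cast_sub (hb i)]
    rw [hcard]
  have hsummand : ∀ i ω, Real.exp (α * ((x i - (if 0 < x i then 1 else 0)
      + (Finset.univ.filter fun j => Z j ω = i).card : ℕ) : ℝ))
      = Real.exp (α * ((x i : ℝ) - (if 0 < x i then (1:ℝ) else 0)))
        * Real.exp (α * (∑ j, X i j) ω) := by
    intro i ω
    rw [hcast i ω, mul_add, Real.exp_add]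
  -- integrability of each summand
  have hint_sum : ∀ i, Integrable (fun ω => Real.exp (α * (∑ j, X i j) ω)) P := by
    intro i
    exact (hXindep i).integrable_exp_mul_sum (hXmeas i) (fun j _ => hXint i j)
  have hInt : ∀ i, Integrable (fun ω => Real.exp (α * ((x i - (if 0 < x i then 1 else 0)
      + (Finset.univ.filter fun j => Z j ω = i).card : ℕ) : ℝ))) P := by
    intro i
    have : (fun ω => Real.exp (α * ((x i - (if 0 < x i then 1 else 0)
        + (Finset.univ.filter fun j => Z j ω = i).card : ℕ) : ℝ)))
        = fun ω => Real.exp (α * ((x i : ℝ) - (if 0 < x i then (1:ℝ) else 0)))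
          * Real.exp (α * (∑ j, X i j) ω) := funext (hsummand i)
    rw [this]
    exact (hint_sum i).const_mul _
  -- compute the per-bin expectation
  set B : ℝ := (1 + (Real.exp α - 1) / n) ^ (kappa x) with hB
  have hper : ∀ i, ∫ ω, Real.exp (α * ((x i - (if 0 < x i then 1 else 0)
      + (Finset.univ.filter fun j => Z j ω = i).card : ℕ) : ℝ)) ∂P
      = Real.exp (α * ((x i : ℝ) - (if 0 < x i then (1:ℝ) else 0))) * B := by
    intro i
    have h1 : ∫ ω, Real.exp (α * ((x i - (if 0 < x i then 1 else 0)
        + (Finset.univ.filter fun j => Z j ω = i).card : ℕ) : ℝ)) ∂P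
        = Real.exp (α * ((x i : ℝ) - (if 0 < x i then (1:ℝ) else 0)))
          * ∫ ω, Real.exp (α * (∑ j, X i j) ω) ∂P := by
      rw [← integral_const_mul]
      exact integral_congr_ae (Filter.Eventually.of_forall (hsummand i))
    rw [h1]
    congr 1
    have h2 : ∫ ω, Real.exp (α * (∑ j, X i j) ω) ∂P = mgf (∑ j, X i j) P α := rfl
    rw [h2, (hXindep i).mgf_sum (hXmeas i) Finset.univ]
    simp only [hmgf]
    rw [Finset.prod_const, Finset.card_univ, Fintype.card_fin]
  -- swap integral and sum
  have hswap : (∫ ω, (∑ i, Real.exp (α * ((x i - (if 0 < x i then 1 else 0)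
      + (Finset.univ.filter fun j => Z j ω = i).card : ℕ) : ℝ))) ∂P)
      = ∑ i, Real.exp (α * ((x i : ℝ) - (if 0 < x i then (1:ℝ) else 0))) * B := by
    rw [integral_finset_sum Finset.univ (fun i _ => hInt i)]
    exact Finset.sum_congr rfl (fun i _ => hper i)
  rw [hswap]
  -- bound B by the exponential
  set C : ℝ := Real.exp ((Real.exp α - 1) / n * ((kappa x) : ℝ)) with hC
  have ht0 : 0 ≤ (Real.exp α - 1) / n :=
    div_nonneg (by nlinarith [Real.add_one_le_exp α]) hn0.le
  have hBC : B ≤ C := by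
    rw [hB, hC]
    calc (1 + (Real.exp α - 1) / n) ^ (kappa x)
        ≤ (Real.exp ((Real.exp α - 1) / n)) ^ (kappa x) := by
          apply pow_le_pow_left₀ (by linarith)
          linarith [Real.add_one_le_exp ((Real.exp α - 1) / n)]
      _ = Real.exp ((Real.exp α - 1) / n * (kappa x)) := by
          rw [← Real.exp_nat_mul]; ring_nf
  have hB0 : 0 ≤ B := pow_nonneg (by linarith) (kappa x)
  -- split the sum
  have hsplit : ∑ i, Real.exp (α * ((x i : ℝ) - (if 0 < x i then (1:ℝ) else 0))) * B
      = (∑ i ∈ Finset.univ.filter (fun i => 0 < x i),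
          Real.exp (α * (x i : ℝ)) * Real.exp (-α)) * B + ((n - (kappa x) : ℕ) : ℝ) * B := by
    rw [← Finset.sum_filter_add_sum_filter_not Finset.univ (fun i => 0 < x i)]
    congr 1
    · rw [← Finset.sum_mul]
      congr 1
      apply Finset.sum_congr rfl
      intro i hi
      rw [Finset.mem_filter] at hi
      rw [if_pos hi.2, ← Real.exp_add]
      ring_nf
    · have hcard2 : (Finset.univ.filter (fun i => ¬ 0 < x i)).card = n - (kappa x) := by
        have := Finset.card_filter_add_card_filter_not
          (s := (Finset.univ : Finset (Fin n))) (p := fun i => 0 < x i)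
        simp only [Finset.card_univ, Fintype.card_fin] at this
        unfold kappa
        omega
      rw [← Finset.sum_mul]
      congr 1
      have : ∀ i ∈ Finset.univ.filter (fun i => ¬ 0 < x i),
          Real.exp (α * ((x i : ℝ) - (if 0 < x i then (1:ℝ) else 0))) = 1 := by
        intro i hi
        rw [Finset.mem_filter] at hi
        have hx0 : x i = 0 := by omega
        rw [if_neg hi.2, hx0]
        simp
      rw [Finset.sum_congr rfl this, Finset.sum_const, hcard2]
      simp
  rw [hsplit]
  -- final estimate
  have hΦ : (∑ i ∈ Finset.univ.filter (fun i => 0 < x i),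
      Real.exp (α * (x i : ℝ)) * Real.exp (-α))
      ≤ (∑ i, Real.exp (α * (x i : ℝ))) * Real.exp (-α) := by
    rw [← Finset.sum_mul]
    apply mul_le_mul_of_nonneg_right _ (Real.exp_pos _).le
    exact Finset.sum_le_sum_of_subset_of_nonneg (Finset.filter_subset _ _)
      (fun i _ _ => (Real.exp_pos _).le)
  have hnk : (0:ℝ) ≤ ((n - (kappa x) : ℕ) : ℝ) := Nat.cast_nonneg _
  have h1 : (∑ i ∈ Finset.univ.filter (fun i => 0 < x i),
      Real.exp (α * (x i : ℝ)) * Real.exp (-α)) * B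
      ≤ (∑ i, Real.exp (α * (x i : ℝ))) * Real.exp (-α) * C := by
    apply mul_le_mul hΦ hBC hB0
    positivity
  have h2 : ((n - (kappa x) : ℕ) : ℝ) * B ≤ ((n - (kappa x) : ℕ) : ℝ) * C :=
    mul_le_mul_of_nonneg_left hBC hnk
  linarith
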